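/- arXiv:2605.06217 — 2 statements merged into one kernel-verified Lean document; each statement's English description precedes it below -/
import Mathlib

section
/- For all nonnegative integers n and nonzero z, the truncated Jacobi triple product identity holds: (-1/z; q)_{n+1} (-zq; q)_n = \sum_{j=-n-1}^{n} \binom{2n+1}{n-j}_q q^{j(j+1)/2} z^j, where \binom{m}{k}_q denotes the Gaussian binomial coefficient. -/
noncomputable def qPoch (q a : ℂ) (n : ℕ) : ℂ := ∏ i ∈ Finset.range n, (1 - a * q ^ i)

/-- Gaussian binomial coefficient, via the q-Pascal recursion
`[m+1, k+1]_q = [m, k]_q + q^(k+1) * [m, k+1]_q`. -/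
noncomputable def qBinom (q : ℂ) : ℕ → ℕ → ℂ
  | _, 0 => 1
  | 0, _ + 1 => 0
  | m + 1, k + 1 => qBinom q m k + q ^ (k + 1) * qBinom q m (k + 1)

lemma qBinom_zero_right (q : ℂ) (m : ℕ) : qBinom q m 0 = 1 := by
  cases m <;> rfl

lemma qBinom_succ_succ (q : ℂ) (m k : ℕ) :
    qBinom q (m+1) (k+1) = qBinom q m k + q ^ (k + 1) * qBinom q m (k + 1) := rfl

lemma qBinom_eq_zero (q : ℂ) : ∀ m k, m < k → qBinom q m k = 0
  | 0, _+1, _ => rfl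
  | m+1, k+1, h => by
      rw [qBinom_succ_succ, qBinom_eq_zero q m k (by omega),
        qBinom_eq_zero q m (k+1) (by omega)]
      ring

/-- q-binomial theorem for the product `∏ (1 + t q^i)`. -/
lemma qbt (q : ℂ) (m : ℕ) : ∀ t : ℂ,
    ∏ i ∈ Finset.range m, (1 + t * q ^ i) =
      ∑ k ∈ Finset.range (m+1),
        qBinom q m k * q ^ (∑ i ∈ Finset.range k, i) * t ^ k := by
  induction m with
  | zero => intro t; simp [qBinom_zero_right]
  | succ m ih =>
    intro t
    rw [Finset.prod_range_succ']
    have h1 : ∀ i, (1 + t * q ^ (i+1)) = 1 + (t*q) * q ^ i := fun i => by ring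
    simp only [h1]
    rw [ih (t*q), pow_zero, mul_one]
    conv_rhs => rw [Finset.sum_range_succ']
    simp only [qBinom_succ_succ, qBinom_zero_right]
    have expand : ∀ k, (qBinom q m k + q ^ (k + 1) * qBinom q m (k + 1)) *
          q ^ (∑ i ∈ Finset.range (k+1), i) * t ^ (k+1)
        = qBinom q m k * q ^ (∑ i ∈ Finset.range (k+1), i) * t ^ (k+1)
          + qBinom q m (k+1) * (q ^ (k+1) * q ^ (∑ i ∈ Finset.range (k+1), i)) * t ^ (k+1) := by
      intro k; ring
    rw [Finset.sum_congr rfl (fun k _ => expand k), Finset.sum_add_distrib]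
    have hY : ∀ k, qBinom q m k * q ^ (∑ i ∈ Finset.range k, i) * (t*q) ^ k * t
        = qBinom q m k * q ^ (∑ i ∈ Finset.range (k+1), i) * t ^ (k+1) := by
      intro k
      rw [Finset.sum_range_succ, pow_add, mul_pow]
      ring
    have hX : ∀ k, qBinom q m k * q ^ (∑ i ∈ Finset.range k, i) * (t*q) ^ k
        = qBinom q m k * (q ^ (∑ i ∈ Finset.range k, i) * q ^ k) * t ^ k := by
      intro k; rw [mul_pow]; ring
    have lhs_eq :
        (∑ k ∈ Finset.range (m+1),
          qBinom q m k * q ^ (∑ i ∈ Finset.range k, i) * (t*q) ^ k) * (1 + t)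
        = (∑ k ∈ Finset.range (m+1),
            qBinom q m k * (q ^ (∑ i ∈ Finset.range k, i) * q ^ k) * t ^ k)
          + ∑ k ∈ Finset.range (m+1),
              qBinom q m k * q ^ (∑ i ∈ Finset.range (k+1), i) * t ^ (k+1) := by
      rw [mul_add, mul_one, Finset.sum_mul]
      congr 1
      · exact Finset.sum_congr rfl fun k _ => hX k
      · exact Finset.sum_congr rfl fun k _ => hY k
    rw [lhs_eq]
    have hXsum :
        (∑ k ∈ Finset.range (m+1),
            qBinom q m k * (q ^ (∑ i ∈ Finset.range k, i) * q ^ k) * t ^ k)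
        = (∑ k ∈ Finset.range (m+1),
            qBinom q m (k+1) * (q ^ (k+1) * q ^ (∑ i ∈ Finset.range (k+1), i)) * t ^ (k+1)) + 1 := by
      rw [Finset.sum_range_succ']
      congr 1
      · rw [Finset.sum_range_succ, qBinom_eq_zero q m (m+1) (by omega)]
        have : ∀ k, qBinom q m (k+1) * (q ^ (∑ i ∈ Finset.range (k+1), i) * q ^ (k+1)) * t ^ (k+1)
            = qBinom q m (k+1) * (q ^ (k+1) * q ^ (∑ i ∈ Finset.range (k+1), i)) * t ^ (k+1) := by
          intro k; ring
        rw [Finset.sum_congr rfl (fun k _ => this k)]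
        ring
      · simp [qBinom_zero_right]
    rw [hXsum]
    simp only [Finset.sum_range_zero, pow_zero, mul_one]
    ring

lemma qBinom_q_zero : ∀ m k, k ≤ m → qBinom 0 m k = 1 := by
  intro m
  induction m with
  | zero => intro k hk; interval_cases k; rfl
  | succ m ih =>
    intro k hk
    cases k with
    | zero => exact qBinom_zero_right 0 (m+1)
    | succ k =>
      rw [qBinom_succ_succ, ih k (by omega), zero_pow (by omega), zero_mul, add_zero]

lemma gauss (j : ℕ) : 2 * ((∑ i ∈ Finset.range j, i : ℕ) : ℤ) = j * (j - 1) := by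
  induction j with
  | zero => simp
  | succ j ih =>
    rw [Finset.sum_range_succ]
    push_cast at ih ⊢
    linear_combination ih

theorem truncated_JTP (q z : ℂ) (hz : z ≠ 0) (n : ℕ) :
    qPoch q (-1/z) (n+1) * qPoch q (-z*q) n =
      ∑ k ∈ Finset.range (2*n+2),
        qBinom q (2*n+1) k * q ^ ((((n:ℤ) - k) * ((n:ℤ) - k + 1)) / 2) *
          z ^ ((n:ℤ) - k) := by
  by_cases hq : q = 0
  · subst hq
    have h01 : qPoch 0 (-z*0) n = 1 := by simp [qPoch]
    have h02 : qPoch 0 (-1/z) (n+1) = 1 + 1/z := by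
      unfold qPoch
      rw [Finset.prod_range_succ']
      simp
      ring
    rw [h01, h02, mul_one]
    have hsub : ({n, n+1} : Finset ℕ) ⊆ Finset.range (2*n+2) := by
      intro x hx
      simp only [Finset.mem_insert, Finset.mem_singleton] at hx
      rcases hx with rfl | rfl <;> simp <;> omega
    have hvan : ∀ x ∈ Finset.range (2*n+2), x ∉ ({n, n+1} : Finset ℕ) →
        qBinom 0 (2*n+1) x * (0:ℂ) ^ ((((n:ℤ) - x) * ((n:ℤ) - x + 1)) / 2)
          * z ^ ((n:ℤ) - x) = 0 := by
      intro x hx hnx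
      simp only [Finset.mem_insert, Finset.mem_singleton, not_or] at hnx
      have hd0 : ((n:ℤ) - x) ≠ 0 := by omega
      have hd1 : ((n:ℤ) - x) + 1 ≠ 0 := by omega
      have hE : (((n:ℤ) - x) * ((n:ℤ) - x + 1)) / 2 ≠ 0 := by
        intro h
        have h2 : (2:ℤ) ∣ ((n:ℤ)-x) * ((n:ℤ)-x+1) := (Int.even_mul_succ_self _).two_dvd
        have hD := Int.ediv_mul_cancel h2
        rw [h, zero_mul] at hD
        rcases mul_eq_zero.mp hD.symm with h' | h'
        · exact hd0 h'
        · exact hd1 h'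
      rw [zero_zpow _ hE]
      ring
    rw [← Finset.sum_subset hsub hvan, Finset.sum_pair (by omega : n ≠ n+1)]
    have hb1 : qBinom 0 (2*n+1) n = 1 := qBinom_q_zero (2*n+1) n (by omega)
    have hb2 : qBinom 0 (2*n+1) (n+1) = 1 := qBinom_q_zero (2*n+1) (n+1) (by omega)
    rw [hb1, hb2]
    have e1 : (((n:ℤ) - n) * ((n:ℤ) - n + 1)) / 2 = 0 := by simp
    have e2 : (((n:ℤ) - (n+1:ℕ)) * ((n:ℤ) - (n+1:ℕ) + 1)) / 2 = 0 := by
      push_cast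
      have : ((n:ℤ) - (n+1)) * ((n:ℤ) - (n+1) + 1) = 0 := by ring
      rw [this]
      simp
    have e3 : (n:ℤ) - (n+1:ℕ) = -1 := by push_cast; ring
    rw [e1, e2, e3, sub_self]
    simp
  · -- main case q ≠ 0
    have hqn : q ^ n ≠ 0 := pow_ne_zero _ hq
    set t : ℂ := (q ^ n * z)⁻¹ with ht
    have htne : t ≠ 0 := inv_ne_zero (mul_ne_zero hqn hz)
    have ht0 : t = q ^ (-(n:ℤ)) * z ^ (-1:ℤ) := by
      rw [ht, mul_inv, zpow_neg, zpow_neg, zpow_natCast, zpow_one]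
    have tpow : ∀ m : ℕ, t ^ m = q ^ (-((n:ℤ)*m)) * z ^ (-(m:ℤ)) := by
      intro m
      rw [ht0, mul_pow, ← zpow_natCast (q ^ (-(n:ℤ))) m, ← zpow_natCast (z ^ (-1:ℤ)) m,
        ← zpow_mul, ← zpow_mul]
      ring_nf
    have hA : (∏ i ∈ Finset.range (n+1), (1 + t * q ^ (n+i))) = qPoch q (-1/z) (n+1) := by
      unfold qPoch
      refine Finset.prod_congr rfl fun i _ => ?_
      rw [ht, pow_add]
      field_simp
      ring
    have hB : (∏ i ∈ Finset.range n, (1 + t * q ^ i))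
        = (q ^ (∑ i ∈ Finset.range n, i) * t ^ n) * qPoch q (-z*q) n := by
      have h1 : ∀ i ∈ Finset.range n, (1 + t * q ^ i) = (q ^ i * t) * (1 + z * q ^ (n - i)) := by
        intro i hi
        have hin : i ≤ n := le_of_lt (Finset.mem_range.mp hi)
        have hpow : q ^ i * q ^ (n-i) = q ^ n := by rw [← pow_add]; congr 1; omega
        rw [ht]
        field_simp
        linear_combination (-z) * hpow
      rw [Finset.prod_congr rfl h1, Finset.prod_mul_distrib, Finset.prod_mul_distrib,
        Finset.prod_pow_eq_pow_sum, Finset.prod_const, Finset.card_range]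
      congr 1
      unfold qPoch
      rw [← Finset.prod_range_reflect]
      refine Finset.prod_congr rfl fun i hi => ?_
      have hin : i < n := Finset.mem_range.mp hi
      have h2 : n - (n - 1 - i) = i + 1 := by omega
      rw [h2, pow_succ']
      ring
    have hsplit : (∏ i ∈ Finset.range (2*n+1), (1 + t * q ^ i))
        = (∏ i ∈ Finset.range n, (1 + t * q ^ i))
          * (∏ i ∈ Finset.range (n+1), (1 + t * q ^ (n+i))) := by
      have h : 2*n+1 = n + (n+1) := by omega
      rw [h, Finset.prod_range_add]
    have hne : q ^ (∑ i ∈ Finset.range n, i) * t ^ n ≠ 0 :=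
      mul_ne_zero (pow_ne_zero _ hq) (pow_ne_zero _ htne)
    have key : qPoch q (-1/z) (n+1) * qPoch q (-z*q) n
        = (q ^ (∑ i ∈ Finset.range n, i) * t ^ n)⁻¹
            * ∏ i ∈ Finset.range (2*n+1), (1 + t * q ^ i) := by
      rw [hsplit, hB, ← hA]
      field_simp
    rw [key, qbt q (2*n+1) t, Finset.mul_sum]
    have hrange : 2*n+1+1 = 2*n+2 := rfl
    rw [hrange]
    refine Finset.sum_congr rfl fun k hk => ?_
    rw [tpow k, tpow n]
    have expo : ((∑ i ∈ Finset.range k, i : ℕ) : ℤ) + (-((n:ℤ)*k))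
          + (-((∑ i ∈ Finset.range n, i : ℕ) : ℤ)) + (n:ℤ)*n
        = (((n:ℤ) - k) * ((n:ℤ) - k + 1)) / 2 := by
      have h2 : (2:ℤ) ∣ ((n:ℤ)-k) * ((n:ℤ)-k+1) := (Int.even_mul_succ_self _).two_dvd
      have hD := Int.ediv_mul_cancel h2
      have hk' := gauss k
      have hn' := gauss n
      have h2eq : 2 * (((∑ i ∈ Finset.range k, i : ℕ) : ℤ) + (-((n:ℤ)*k))
            + (-((∑ i ∈ Finset.range n, i : ℕ) : ℤ)) + (n:ℤ)*n)
          = 2 * ((((n:ℤ) - k) * ((n:ℤ) - k + 1)) / 2) := by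
        linear_combination hk' - hn' - hD
      linarith
    rw [← expo]
    have hzz : ((n:ℤ) - k) = (n:ℤ) + (-(k:ℤ)) := by ring
    rw [hzz]
    simp only [zpow_add₀ hq, zpow_add₀ hz, zpow_neg, zpow_natCast]
    field_simp
end

section
/- The pair (\alpha_n, \beta_n) with \alpha_n = z^n q^{n(n+1)/2} for n \in \mathbb{Z} and \beta_n = (-1/z; q)_{n+1} (-zq; q)_n / (q; q)_{2n+1} for n \ge 0 forms an asymmetric bilateral Bailey pair with a = 1 and \lambda = 1; that is, for every n \ge 0, \beta_n = \sum_{k=-n-1}^{n} \alpha_k / ((q;q)_{n-k} (q;q)_{n+k+1}). -/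
noncomputable def qPochInf (q a : ℂ) : ℂ := ∏' i : ℕ, (1 - a * q ^ i)

open Finset

private lemma qPoch_succ' (q a : ℂ) (n : ℕ) : qPoch q a (n+1) = qPoch q a n * (1 - a * q^n) :=
  prod_range_succ _ _

private lemma fac_ne (q : ℂ) (hq : ‖q‖ < 1) (i : ℕ) : (1 : ℂ) - q * q ^ i ≠ 0 := by
  intro h
  have h1 : q * q ^ i = 1 := by linear_combination -h
  have h2 : ‖q‖ * ‖q‖ ^ i = 1 := by
    have := congrArg (‖·‖) h1
    simpa [map_mul, map_pow] using this
  have h3 : ‖q‖ ^ i ≤ 1 := pow_le_one₀ (norm_nonneg q) hq.le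
  nlinarith [norm_nonneg q, pow_nonneg (norm_nonneg q) i]

private lemma qq_ne (q : ℂ) (hq : ‖q‖ < 1) (m : ℕ) : qPoch q q m ≠ 0 := by
  unfold qPoch
  exact Finset.prod_ne_zero_iff.2 fun i _ => fac_ne q hq i

private noncomputable def Cq (q : ℂ) (N k : ℕ) : ℂ :=
  qPoch q q N / (qPoch q q k * qPoch q q (N - k))

private lemma pascal (q : ℂ) (hq : ‖q‖ < 1) (m k : ℕ) :
    Cq q (m+k+2) (k+1) = Cq q (m+k+1) (k+1) + q^(m+1) * Cq q (m+k+1) k := by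
  unfold Cq
  have h1 : m+k+2 - (k+1) = m+1 := by omega
  have h2 : m+k+1 - (k+1) = m := by omega
  have h3 : m+k+1 - k = m+1 := by omega
  rw [h1, h2, h3]
  rw [show m+k+2 = (m+k+1)+1 from rfl, qPoch_succ' q q (m+k+1), qPoch_succ' q q m,
    qPoch_succ' q q k]
  have hm := qq_ne q hq m
  have hk := qq_ne q hq k
  have hmk := qq_ne q hq (m+k+1)
  have f1 := fac_ne q hq m
  have f2 := fac_ne q hq k
  field_simp
  ring

private lemma Cq_zero (q : ℂ) (hq : ‖q‖ < 1) (N : ℕ) : Cq q N 0 = 1 := by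
  unfold Cq qPoch
  simp only [Finset.range_zero, Finset.prod_empty, one_mul, Nat.sub_zero]
  exact div_self (qq_ne q hq N)

private lemma Cq_self (q : ℂ) (hq : ‖q‖ < 1) (N : ℕ) : Cq q N N = 1 := by
  unfold Cq
  rw [Nat.sub_self]
  simp only [qPoch, Finset.range_zero, Finset.prod_empty, mul_one]
  exact div_self (qq_ne q hq N)

private lemma gbinom (q : ℂ) (hq : ‖q‖ < 1) (x : ℂ) (N : ℕ) :
    ∑ k ∈ range (N+1), q^(∑ i ∈ range k, i) * x^k * Cq q N k
      = ∏ i ∈ range N, (1 + x * q^i) := by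
  induction N with
  | zero => simp [Cq_zero q hq]
  | succ N ih =>
    rw [prod_range_succ, ← ih]
    rw [Finset.sum_range_succ' (fun k => q^(∑ i ∈ range k, i) * x^k * Cq q (N+1) k) (N+1)]
    rw [Finset.sum_range_succ (fun k => q^(∑ i ∈ range (k+1), i) * x^(k+1) * Cq q (N+1) (k+1)) N]
    have hsplit : ∀ k ∈ range N,
        q^(∑ i ∈ range (k+1), i) * x^(k+1) * Cq q (N+1) (k+1)
          = q^(∑ i ∈ range (k+1), i) * x^(k+1) * Cq q N (k+1)
            + x * q^N * (q^(∑ i ∈ range k, i) * x^k * Cq q N k) := by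
      intro k hk
      have hk' : k < N := mem_range.1 hk
      have hm : N + 1 = (N - 1 - k) + k + 2 := by omega
      have hm2 : N = (N - 1 - k) + k + 1 := by omega
      rw [hm, pascal q hq (N-1-k) k, ← hm2]
      have hTs : (∑ i ∈ range (k+1), i) = (∑ i ∈ range k, i) + k := sum_range_succ _ _
      have hq1 : q^(∑ i ∈ range (k+1), i) * q^(N - 1 - k + 1)
          = q^(∑ i ∈ range k, i) * q^N := by
        rw [← pow_add, ← pow_add]; congr 1; rw [hTs]; omega
      linear_combination x^(k+1) * Cq q N k * hq1
    rw [Finset.sum_congr rfl hsplit, Finset.sum_add_distrib]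
    have hf0 : q^(∑ i ∈ range 0, i) * x^0 * Cq q (N+1) 0
        = q^(∑ i ∈ range 0, i) * x^0 * Cq q N 0 := by
      rw [Cq_zero q hq, Cq_zero q hq]
    have hfn : q^(∑ i ∈ range (N+1), i) * x^(N+1) * Cq q (N+1) (N+1)
        = x * q^N * (q^(∑ i ∈ range N, i) * x^N * Cq q N N) := by
      rw [Cq_self q hq, Cq_self q hq, sum_range_succ, pow_add]
      ring
    rw [hfn, hf0]
    have hS := Finset.sum_range_succ' (fun k => q^(∑ i ∈ range k, i) * x^k * Cq q N k) N
    have hS2 := Finset.sum_range_succ (fun k => q^(∑ i ∈ range k, i) * x^k * Cq q N k) N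
    have hSS : (∑ k ∈ range N, q^(∑ i ∈ range (k+1), i) * x^(k+1) * Cq q N (k+1))
          + q^(∑ i ∈ range 0, i) * x^0 * Cq q N 0
        = (∑ k ∈ range N, q^(∑ i ∈ range k, i) * x^k * Cq q N k)
          + q^(∑ i ∈ range N, i) * x^N * Cq q N N := by
      rw [← hS, hS2]
    rw [← Finset.mul_sum, hS2]
    linear_combination hSS

private lemma gbinom_div (q : ℂ) (hq : ‖q‖ < 1) (x : ℂ) (N : ℕ) :
    ∑ k ∈ range (N+1), q^(∑ i ∈ range k, i) * x^k / (qPoch q q k * qPoch q q (N-k))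
      = (∏ i ∈ range N, (1 + x * q^i)) / qPoch q q N := by
  rw [← gbinom q hq x N, Finset.sum_div]
  refine Finset.sum_congr rfl fun k _ => ?_
  rw [Cq]
  have h1 := qq_ne q hq N
  have h2 := qq_ne q hq k
  have h3 := qq_ne q hq (N - k)
  field_simp

private lemma two_T (m : ℕ) : 2 * (∑ i ∈ range m, (i:ℤ)) = (m : ℤ) * ((m : ℤ) - 1) := by
  induction m with
  | zero => simp
  | succ m ih =>
    rw [sum_range_succ]
    push_cast
    linear_combination ih

private lemma ek_eq (n k : ℕ) :
    (((k:ℤ) - ((n:ℤ)+1)) * ((k:ℤ) - (n:ℤ))) / 2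
      = ((∑ i ∈ range k, i : ℕ) : ℤ) + ((∑ i ∈ range (n+1), i : ℕ) : ℤ) - ((n*k : ℕ) : ℤ) := by
  have h1 := two_T k
  have h2 := two_T (n+1)
  have h3 : (((k:ℤ) - ((n:ℤ)+1)) * ((k:ℤ) - (n:ℤ)))
      = 2 * (((∑ i ∈ range k, i : ℕ) : ℤ) + ((∑ i ∈ range (n+1), i : ℕ) : ℤ)
          - ((n*k : ℕ) : ℤ)) := by
    push_cast at h2 ⊢
    linear_combination -h1 - h2
  rw [h3, Int.mul_ediv_cancel_left _ two_ne_zero]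

private lemma prod_split (q z : ℂ) (hq0 : q ≠ 0) (hz : z ≠ 0) (n : ℕ) :
    (z^(n+1))⁻¹ * q^(∑ i ∈ range (n+1), i) * ∏ i ∈ range (2*n+1), (1 + z*(q^n)⁻¹ * q^i)
      = qPoch q (-1/z) (n+1) * qPoch q (-z*q) n := by
  have h21 : 2*n+1 = (n+1)+n := by omega
  rw [h21, prod_range_add]
  have hB : ∏ i ∈ range n, (1 + z*(q^n)⁻¹ * q^((n+1)+i)) = qPoch q (-z*q) n := by
    unfold qPoch
    refine prod_congr rfl fun i _ => ?_
    have hpow : q^(n+1+i) = q^n * (q * q^i) := by ring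
    rw [hpow]
    have hc : (q^n)⁻¹ * (q^n * (q*q^i)) = q*q^i := by
      field_simp
    linear_combination z * hc
  have hc : (z^(n+1))⁻¹ * q^(∑ i ∈ range (n+1), i) = ∏ j ∈ range (n+1), (q^j * z⁻¹) := by
    rw [prod_mul_distrib, prod_const, Finset.prod_pow_eq_pow_sum, inv_pow, card_range]
    ring
  have hrefl := Finset.prod_range_reflect (fun i => 1 + z*(q^n)⁻¹ * q^i) (n+1)
  rw [hB, hc, ← hrefl, ← mul_assoc, ← prod_mul_distrib]
  have hA : ∏ j ∈ range (n+1), (q^j * z⁻¹ * (1 + z*(q^n)⁻¹ * q^(n+1-1-j)))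
      = qPoch q (-1/z) (n+1) := by
    unfold qPoch
    simp only [Nat.add_sub_cancel]
    refine prod_congr rfl fun j hj => ?_
    have hj' : j ≤ n := by have := mem_range.1 hj; omega
    have hp : q^(n-j) * q^j = q^n := by rw [← pow_add]; congr 1; omega
    have hqn : (q:ℂ)^n ≠ 0 := pow_ne_zero _ hq0
    field_simp
    linear_combination z * hp
  rw [hA]

private lemma qPoch_zero_q (a : ℂ) (m : ℕ) : qPoch 0 a (m+1) = 1 - a := by
  unfold qPoch
  rw [Finset.prod_range_succ']
  simp

private lemma qPoch_zero_zero (m : ℕ) : qPoch 0 0 m = 1 := by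
  unfold qPoch; simp

private lemma e_ne (n k : ℕ) (h1 : k ≠ n) (h2 : k ≠ n+1) :
    (((k:ℤ) - ((n:ℤ)+1)) * ((k:ℤ) - (n:ℤ))) / 2 ≠ 0 := by
  have hm0 : (k:ℤ) - ((n:ℤ)+1) ≠ 0 := by omega
  have hm1 : (k:ℤ) - ((n:ℤ)+1) + 1 ≠ 0 := by omega
  obtain ⟨c, hc⟩ := Int.even_mul_succ_self ((k:ℤ) - ((n:ℤ)+1))
  have hpne : ((k:ℤ) - ((n:ℤ)+1)) * (((k:ℤ) - ((n:ℤ)+1)) + 1) ≠ 0 := mul_ne_zero hm0 hm1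
  have heq : ((k:ℤ) - ((n:ℤ)+1)) * ((k:ℤ) - (n:ℤ))
      = ((k:ℤ) - ((n:ℤ)+1)) * (((k:ℤ) - ((n:ℤ)+1)) + 1) := by ring
  rw [heq, hc]
  rw [hc] at hpne
  omega

theorem asymmetric_bilateral_Bailey_pair_one (q z : ℂ) (hq : ‖q‖ < 1)
    (hz : z ≠ 0) (n : ℕ) :
    qPoch q (-1/z) (n+1) * qPoch q (-z*q) n / qPoch q q (2*n+1) =
      ∑ k ∈ Finset.range (2*n+2),
        z ^ ((k:ℤ) - ((n:ℤ)+1)) *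
          q ^ ((((k:ℤ) - ((n:ℤ)+1)) * ((k:ℤ) - (n:ℤ))) / 2) /
          (qPoch q q (2*n+1-k) * qPoch q q k) := by
  rcases eq_or_ne q 0 with rfl | hq0
  · have hrhs : ∀ k ∈ Finset.range (2*n+2),
        z ^ ((k:ℤ) - ((n:ℤ)+1)) *
          (0:ℂ) ^ ((((k:ℤ) - ((n:ℤ)+1)) * ((k:ℤ) - (n:ℤ))) / 2) /
          (qPoch 0 0 (2*n+1-k) * qPoch 0 0 k)
        = (if k = n then z⁻¹ else 0) + (if k = n+1 then (1:ℂ) else 0) := by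
      intro k _
      rw [qPoch_zero_zero, qPoch_zero_zero]
      by_cases hk1 : k = n
      · subst hk1
        have h1 : ((k:ℤ) - ((k:ℤ)+1)) = -1 := by ring
        have h2 : ((((k:ℤ) - ((k:ℤ)+1)) * ((k:ℤ) - (k:ℤ)))) / 2 = 0 := by
          rw [h1]; simp
        rw [h2, h1]
        simp
      by_cases hk2 : k = n+1
      · subst hk2
        have h2 : ((((n+1:ℕ):ℤ) - ((n:ℤ)+1)) * (((n+1:ℕ):ℤ) - (n:ℤ)))/2 = 0 := by
          push_cast; norm_num
        have h3 : (((n+1:ℕ):ℤ) - ((n:ℤ)+1)) = 0 := by push_cast; ring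
        rw [h2, h3]
        simp [hk1]
      · rw [zero_zpow _ (e_ne n k hk1 hk2)]
        simp [hk1, hk2]
    rw [Finset.sum_congr rfl hrhs, Finset.sum_add_distrib,
      Finset.sum_ite_eq' (Finset.range (2*n+2)) n fun _ => z⁻¹,
      Finset.sum_ite_eq' (Finset.range (2*n+2)) (n+1) fun _ => (1:ℂ)]
    have hn1 : n ∈ Finset.range (2*n+2) := by simp; omega
    have hn2 : n+1 ∈ Finset.range (2*n+2) := by simp; omega
    rw [if_pos hn1, if_pos hn2]
    rw [mul_zero, qPoch_zero_q, qPoch_zero_zero, qPoch_zero_zero]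
    field_simp
    ring
  · have key := gbinom_div q hq (z*(q^n)⁻¹) (2*n+1)
    have hqn : (q:ℂ)^n ≠ 0 := pow_ne_zero _ hq0
    have hrhs : (∑ k ∈ Finset.range (2*n+2),
        z ^ ((k:ℤ) - ((n:ℤ)+1)) *
          q ^ ((((k:ℤ) - ((n:ℤ)+1)) * ((k:ℤ) - (n:ℤ))) / 2) /
          (qPoch q q (2*n+1-k) * qPoch q q k))
        = (z^(n+1))⁻¹ * q^(∑ i ∈ range (n+1), i) *
          ∑ k ∈ range (2*n+1+1), q^(∑ i ∈ range k, i) * (z*(q^n)⁻¹)^k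
            / (qPoch q q k * qPoch q q (2*n+1-k)) := by
      rw [Finset.mul_sum]
      refine Finset.sum_congr rfl fun k hk => ?_
      rw [ek_eq n k]
      rw [zpow_sub₀ hq0, zpow_add₀ hq0, zpow_natCast, zpow_natCast, zpow_natCast]
      have hz1 : (k:ℤ) - ((n:ℤ)+1) = (k:ℤ) - ((n+1:ℕ):ℤ) := by push_cast; ring
      rw [hz1, zpow_sub₀ hz, zpow_natCast, zpow_natCast]
      have h1 := qq_ne q hq k
      have h2 := qq_ne q hq (2*n+1-k)
      field_simp
      rw [div_pow, ← pow_mul, mul_div_assoc', mul_comm, mul_div_assoc, div_self (pow_ne_zero _ hq0), mul_one]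
    rw [hrhs, key, ← mul_div_assoc, prod_split q z hq0 hz n]
end
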